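/- arXiv:2511.02196 — 2 statements merged into one kernel-verified Lean document; each statement's English description precedes it below -/
import Mathlib

section
/- Reachability matrix update correctness: if R is the reachability relation of DAG G and G' is the reduction of G at v, then the reachability relation of G' restricted to V \ {v} equals R restricted to V \ {v}; equivalently, setting R'(u,w) = R(u,w) for u, w ≠ v correctly computes reachability in G'. -/
/-- Reduction of graph `E` at node `v`: delete `v`, add bypass edges from
in-neighbors of `v` to out-neighbors of `v`. -/
def Reduced {V : Type*} (E : V → V → Prop) (v : V) : V → V → Prop :=
  fun a b => (a ≠ v ∧ b ≠ v ∧ E a b) ∨ (E a v ∧ E v b)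

theorem reachability_matrix_update_correct {V : Type*} [Fintype V] (E : V → V → Prop)
    (hacyc : ∀ x, ¬ Relation.TransGen E x x) (v : V) :
    ∀ a b : V, a ≠ v → b ≠ v →
      (Relation.ReflTransGen (Reduced E v) a b ↔ Relation.ReflTransGen E a b) := by
  intro a b ha hb
  constructor
  · intro h
    clear ha hb
    induction h with
    | refl => exact .refl
    | tail _ hstep ih =>
      rcases hstep with ⟨_, _, he⟩ | ⟨h1, h2⟩
      · exact ih.tail he
      · exact (ih.tail h1).tail h2
  · intro h
    suffices H : ∀ x, Relation.ReflTransGen E x b →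
        (x ≠ v → Relation.ReflTransGen (Reduced E v) x b) ∧
        (x = v → ∀ p, p ≠ v → E p v → Relation.ReflTransGen (Reduced E v) p b) by
      exact (H a h).1 ha
    intro x hx
    induction hx using Relation.ReflTransGen.head_induction_on with
    | refl =>
      refine ⟨fun _ => .refl, fun hxv => absurd hxv.symm hb.symm⟩
      -- note: hb : b ≠ v, if b = v contradiction
    | head hstep _ ih =>
      rename_i a' c _
      constructor
      · intro ha'
        by_cases hc : c = v
        · subst hc
          exact ih.2 rfl a' ha' hstep
        · exact (ih.1 hc).head (Or.inl ⟨ha', hc, hstep⟩)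
      · intro hav p hp hpv
        rw [hav] at hstep
        have hc : c ≠ v := by
          intro hcv
          rw [hcv] at hstep
          exact hacyc v (.single hstep)
        exact (ih.1 hc).head (Or.inr ⟨hpv, hstep⟩)
end

section
/- No new redundant edges: in pattern reduction, if the bypass edge (u, w) is added only when w is not already reachable from u in G \ {v} via other paths, the resulting graph G' has the same reachability relation as the full reduction and contains no edge (a,b) for which there is an alternative a-to-b path avoiding that edge created in the same step. -/
/-- The graph `E` with node `v` removed. -/
def RemovedRel {V : Type*} (E : V → V → Prop) (v : V) : V → V → Prop :=
  fun a b => a ≠ v ∧ b ≠ v ∧ E a b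

/-- Restricted reduction at `v`: the bypass edge `(u, w)` is added only when `w` is
not already reachable from `u` in `G` with `v` removed. -/
def ReducedRestricted {V : Type*} (E : V → V → Prop) (v : V) : V → V → Prop :=
  fun a b => (a ≠ v ∧ b ≠ v ∧ E a b) ∨
    (E a v ∧ E v b ∧ ¬ Relation.ReflTransGen (RemovedRel E v) a b)

theorem restricted_reduction_same_reachability {V : Type*} [Fintype V] (E : V → V → Prop)
    (hacyc : ∀ x, ¬ Relation.TransGen E x x) (v : V) :
    ∀ a b : V, a ≠ v → b ≠ v →
      (Relation.ReflTransGen (ReducedRestricted E v) a b ↔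
        Relation.ReflTransGen (Reduced E v) a b) := by
  intro a b ha hb
  clear ha hb
  constructor
  · intro h
    refine Relation.ReflTransGen.mono ?_ _ _ h
    intro x y hxy
    rcases hxy with h1 | ⟨h2, h3, _⟩
    · exact Or.inl h1
    · exact Or.inr ⟨h2, h3⟩
  · intro h
    have key : ∀ x y, Reduced E v x y →
        Relation.ReflTransGen (ReducedRestricted E v) x y := by
      intro x y hxy
      rcases hxy with h1 | ⟨h2, h3⟩
      · exact Relation.ReflTransGen.single (Or.inl h1)
      · by_cases hr : Relation.ReflTransGen (RemovedRel E v) x y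
        · exact Relation.ReflTransGen.mono (fun p q hpq => Or.inl hpq) _ _ hr
        · exact Relation.ReflTransGen.single (Or.inr ⟨h2, h3, hr⟩)
    induction h with
    | refl => exact Relation.ReflTransGen.refl
    | tail hstep hlast ih => exact ih.trans (key _ _ hlast)
end
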